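/- Every minimal unsatisfiable subset (MUS) of an unsatisfiable finite CNF Σ intersects every minimal correction subset (MCS) of Σ; that is, MUSes are hitting sets of the collection of MCSes. -/
import Mathlib


variable {α : Type*} [Nonempty α]

def Satisfiable (Φ : Set (α → Prop)) : Prop := ∃ a : α, ∀ c ∈ Φ, c a

/-- `Γ` is a minimal unsatisfiable subset of `Sig`. -/
def IsMUS (Sig Γ : Set (α → Prop)) : Prop :=
  Γ ⊆ Sig ∧ ¬ Satisfiable Γ ∧ ∀ Γ' ⊂ Γ, Satisfiable Γ'

/-- `Ψ` is a minimal correction subset of `Sig`. -/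
def IsMCS (Sig Ψ : Set (α → Prop)) : Prop :=
  Ψ ⊆ Sig ∧ Satisfiable (Sig \ Ψ) ∧ ∀ Ψ' ⊂ Ψ, ¬ Satisfiable (Sig \ Ψ')

/-- every MUS of a finite unsatisfiable CNF intersects every MCS. -/
theorem mus_hits_mcs (Sig : Set (α → Prop)) (hfin : Sig.Finite)
    (hunsat : ¬ Satisfiable Sig)
    (Γ Ψ : Set (α → Prop)) (hΓ : IsMUS Sig Γ) (hΨ : IsMCS Sig Ψ) :
    (Γ ∩ Ψ).Nonempty := by
  rw [Set.nonempty_iff_ne_empty]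
  intro hemp
  obtain ⟨hΓsub, hΓunsat, _⟩ := hΓ
  obtain ⟨_, ⟨a, ha⟩, _⟩ := hΨ
  exact hΓunsat ⟨a, fun c hc => ha c ⟨hΓsub hc,
    fun hcΨ => Set.eq_empty_iff_forall_notMem.mp hemp c ⟨hc, hcΨ⟩⟩⟩
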